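/- Assume r ≠ 0 and let γ* ≥ 1 satisfy h₁(h₂(γ*)) + 1 = γ*. Define P* = ((γ*/M)·Σ + I_d)⁻¹ ∈ ℝ^{d×d} and ω* = (h₂(γ*)·R + I_n)⁻¹ r ∈ ℝⁿ. Then there exist real numbers α, β > 0 such that (αP*, βω*) is a stationary point of L, i.e., the Fréchet derivative of L (jointly in (P, ω) ∈ ℝ^{d×d} × ℝⁿ) vanishes at (αP*, βω*). -/

import Mathlib

open Finset Matrix

attribute [local instance] Matrix.normedAddCommGroup Matrix.normedSpace

/-- The closed-form WPGD risk
`L(P, ω) = M − 2·tr(Σ²P)·(ωᵀr) + M·‖ω‖²·tr(ΣPᵀΣP) + (‖ω‖² + ωᵀRω)·tr(Σ²PᵀΣP)`. -/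
noncomputable def Lrisk {d n : ℕ} (Sg : Matrix (Fin d) (Fin d) ℝ)
    (R : Matrix (Fin n) (Fin n) ℝ) (r : Fin n → ℝ) (M : ℝ)
    (P : Matrix (Fin d) (Fin d) ℝ) (w : Fin n → ℝ) : ℝ :=
  M - 2 * Matrix.trace (Sg ^ 2 * P) * (w ⬝ᵥ r)
    + M * (∑ i, w i ^ 2) * Matrix.trace (Sg * Pᵀ * Sg * P)
    + ((∑ i, w i ^ 2) + w ⬝ᵥ (R *ᵥ w)) * Matrix.trace (Sg ^ 2 * Pᵀ * Sg * P)

/-- `h₁(γ̄) = (Σᵢ λᵢ aᵢ²/(1+λᵢγ̄)²) · (Σᵢ aᵢ²/(1+λᵢγ̄)²)⁻¹`. -/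
noncomputable def h1 {n : ℕ} (lam a : Fin n → ℝ) (γ : ℝ) : ℝ :=
  (∑ i, lam i * a i ^ 2 / (1 + lam i * γ) ^ 2) * (∑ i, a i ^ 2 / (1 + lam i * γ) ^ 2)⁻¹

/-- `h₂(γ) = (1 + M·(Σᵢ sᵢ²/(M+sᵢγ)²)·(Σᵢ sᵢ³/(M+sᵢγ)²)⁻¹)⁻¹`. -/
noncomputable def h2 {d : ℕ} (s : Fin d → ℝ) (M γ : ℝ) : ℝ :=
  (1 + M * (∑ i, s i ^ 2 / (M + s i * γ) ^ 2) * (∑ i, s i ^ 3 / (M + s i * γ) ^ 2)⁻¹)⁻¹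

noncomputable def trCLM {d : ℕ} (X : Matrix (Fin d) (Fin d) ℝ) :
    Matrix (Fin d) (Fin d) ℝ →L[ℝ] ℝ :=
  LinearMap.toContinuousLinearMap
    { toFun := fun P => Matrix.trace (X * P)
      map_add' := fun P Q => by simp [Matrix.mul_add]
      map_smul' := fun c P => by simp [Matrix.mul_smul] }

@[simp] lemma trCLM_apply {d : ℕ} (X P : Matrix (Fin d) (Fin d) ℝ) :
    trCLM X P = Matrix.trace (X * P) := rfl

noncomputable def dotrCLM {n : ℕ} (u : Fin n → ℝ) : (Fin n → ℝ) →L[ℝ] ℝ :=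
  LinearMap.toContinuousLinearMap
    { toFun := fun v => v ⬝ᵥ u
      map_add' := fun v w => add_dotProduct v w u
      map_smul' := fun c v => smul_dotProduct c v u }

@[simp] lemma dotrCLM_apply {n : ℕ} (u v : Fin n → ℝ) : dotrCLM u v = v ⬝ᵥ u := rfl

noncomputable def coordCLM {n : ℕ} (i : Fin n) : (Fin n → ℝ) →L[ℝ] ℝ :=
  LinearMap.toContinuousLinearMap (LinearMap.proj i)

@[simp] lemma coordCLM_apply {n : ℕ} (i : Fin n) (v : Fin n → ℝ) : coordCLM i v = v i := rfl

noncomputable def rowCLM {n : ℕ} (R : Matrix (Fin n) (Fin n) ℝ) (i : Fin n) :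
    (Fin n → ℝ) →L[ℝ] ℝ :=
  LinearMap.toContinuousLinearMap
    { toFun := fun v => (R *ᵥ v) i
      map_add' := fun v w => by simp [Matrix.mulVec_add]
      map_smul' := fun c v => by simp [Matrix.mulVec_smul] }

@[simp] lemma rowCLM_apply {n : ℕ} (R : Matrix (Fin n) (Fin n) ℝ) (i : Fin n) (v : Fin n → ℝ) :
    rowCLM R i v = (R *ᵥ v) i := rfl

noncomputable def entCLM {d : ℕ} (i j : Fin d) : Matrix (Fin d) (Fin d) ℝ →L[ℝ] ℝ :=
  LinearMap.toContinuousLinearMap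
    { toFun := fun P => P i j
      map_add' := fun _ _ => rfl
      map_smul' := fun _ _ => rfl }

@[simp] lemma entCLM_apply {d : ℕ} (i j : Fin d) (P : Matrix (Fin d) (Fin d) ℝ) :
    entCLM i j P = P i j := rfl

noncomputable def quadCLM {d : ℕ} (X Y : Matrix (Fin d) (Fin d) ℝ) (i j : Fin d) :
    Matrix (Fin d) (Fin d) ℝ →L[ℝ] ℝ :=
  LinearMap.toContinuousLinearMap
    { toFun := fun P => (X * Pᵀ * Y) i j
      map_add' := fun P Q => by
        simp [Matrix.transpose_add, Matrix.mul_add, Matrix.add_mul]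
      map_smul' := fun c P => by
        simp [Matrix.transpose_smul, Matrix.mul_smul, Matrix.smul_mul]  }

@[simp] lemma quadCLM_apply {d : ℕ} (X Y : Matrix (Fin d) (Fin d) ℝ) (i j : Fin d)
    (P : Matrix (Fin d) (Fin d) ℝ) : quadCLM X Y i j P = (X * Pᵀ * Y) i j := rfl

lemma sum_sum_eq_trace {d : ℕ} (A B : Matrix (Fin d) (Fin d) ℝ) :
    ∑ i, ∑ j, A i j * B j i = Matrix.trace (A * B) := by
  simp [Matrix.trace, Matrix.diag, Matrix.mul_apply]


noncomputable def asN {E : Type*} [NormedAddCommGroup E] [NormedSpace ℝ E]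
    (f : E →L[ℝ] ℝ) : E →L[ℝ] ℝ := f

@[simp] lemma asN_zero_apply {E : Type*} [NormedAddCommGroup E] [NormedSpace ℝ E] (x : E) :
    asN (0 : E →L[ℝ] ℝ) x = 0 := rfl

noncomputable def entP {d n : ℕ} (i j : Fin d) :=
  asN ((entCLM i j).comp (ContinuousLinearMap.fst ℝ (Matrix (Fin d) (Fin d) ℝ) (Fin n → ℝ)))

@[simp] lemma entP_apply {d n : ℕ} (i j : Fin d) (z : Matrix (Fin d) (Fin d) ℝ × (Fin n → ℝ)) :
    entP i j z = z.1 i j := rfl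

noncomputable def quadP {d n : ℕ} (X Y : Matrix (Fin d) (Fin d) ℝ) (i j : Fin d) :=
  asN ((quadCLM X Y i j).comp (ContinuousLinearMap.fst ℝ (Matrix (Fin d) (Fin d) ℝ) (Fin n → ℝ)))

@[simp] lemma quadP_apply {d n : ℕ} (X Y : Matrix (Fin d) (Fin d) ℝ) (i j : Fin d)
    (z : Matrix (Fin d) (Fin d) ℝ × (Fin n → ℝ)) : quadP X Y i j z = (X * z.1ᵀ * Y) i j := rfl

noncomputable def coordP {d n : ℕ} (i : Fin n) :=
  asN ((coordCLM i).comp (ContinuousLinearMap.snd ℝ (Matrix (Fin d) (Fin d) ℝ) (Fin n → ℝ)))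

@[simp] lemma coordP_apply {d n : ℕ} (i : Fin n) (z : Matrix (Fin d) (Fin d) ℝ × (Fin n → ℝ)) :
    coordP i z = z.2 i := rfl

noncomputable def rowP {d n : ℕ} (R : Matrix (Fin n) (Fin n) ℝ) (i : Fin n) :=
  asN ((rowCLM R i).comp (ContinuousLinearMap.snd ℝ (Matrix (Fin d) (Fin d) ℝ) (Fin n → ℝ)))

@[simp] lemma rowP_apply {d n : ℕ} (R : Matrix (Fin n) (Fin n) ℝ) (i : Fin n)
    (z : Matrix (Fin d) (Fin d) ℝ × (Fin n → ℝ)) : rowP (d := d) R i z = (R *ᵥ z.2) i := rfl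

lemma lrisk_hasFDerivAt_zero {d n : ℕ} (Sg : Matrix (Fin d) (Fin d) ℝ)
    (R : Matrix (Fin n) (Fin n) ℝ) (r : Fin n → ℝ) (M : ℝ)
    (P₀ : Matrix (Fin d) (Fin d) ℝ) (w₀ : Fin n → ℝ)
    (hkeyP : ∀ zz : Matrix (Fin d) (Fin d) ℝ,
      2 * (∑ x, w₀ x * r x) * (∑ x, ∑ y, (Sg * Sg) x y * zz y x)
      = (M * ∑ x, w₀ x * w₀ x) *
          ((∑ x, ∑ y, (Sg * P₀ᵀ * Sg) x y * zz y x) + (∑ x, ∑ y, P₀ y x * (Sg * zzᵀ * Sg) x y))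
        + ((∑ x, w₀ x * w₀ x) + ∑ x, w₀ x * (R *ᵥ w₀) x) *
          ((∑ x, ∑ y, (Sg * Sg * P₀ᵀ * Sg) x y * zz y x)
            + (∑ x, ∑ y, P₀ y x * (Sg * Sg * zzᵀ * Sg) x y)))
    (hkeyw : ∀ v : Fin n → ℝ,
      2 * (∑ x, ∑ y, (Sg * Sg) x y * P₀ y x) * (∑ x, r x * v x)
      = (∑ x, ∑ y, (Sg * P₀ᵀ * Sg) x y * P₀ y x) * (M * (2 * ∑ x, w₀ x * v x))
        + (∑ x, ∑ y, (Sg * Sg * P₀ᵀ * Sg) x y * P₀ y x) *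
          (2 * (∑ x, w₀ x * v x) + ((∑ x, w₀ x * (R *ᵥ v) x) + ∑ x, (R *ᵥ w₀) x * v x))) :
    HasFDerivAt
      (fun pw : Matrix (Fin d) (Fin d) ℝ × (Fin n → ℝ) => Lrisk Sg R r M pw.1 pw.2)
      (0 : (Matrix (Fin d) (Fin d) ℝ × (Fin n → ℝ)) →L[ℝ] ℝ) (P₀, w₀) := by
  set z₀ : Matrix (Fin d) (Fin d) ℝ × (Fin n → ℝ) := (P₀, w₀) with hz₀
  have hfun : (fun pw : Matrix (Fin d) (Fin d) ℝ × (Fin n → ℝ) => Lrisk Sg R r M pw.1 pw.2)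
      = (fun z : Matrix (Fin d) (Fin d) ℝ × (Fin n → ℝ) =>
        M - 2 * (∑ i, ∑ j, (Sg * Sg) i j * z.1 j i) * (∑ i, z.2 i * r i)
        + M * (∑ i, z.2 i * z.2 i) * (∑ i, ∑ j, (Sg * z.1ᵀ * Sg) i j * z.1 j i)
        + ((∑ i, z.2 i * z.2 i) + ∑ i, z.2 i * (R *ᵥ z.2) i)
            * (∑ i, ∑ j, (Sg * Sg * z.1ᵀ * Sg) i j * z.1 j i)) := by
    funext z
    simp only [Lrisk, dotProduct, pow_two, ← sum_sum_eq_trace]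
  rw [hfun]
  have hA1 : HasFDerivAt (fun z : Matrix (Fin d) (Fin d) ℝ × (Fin n → ℝ) =>
      ∑ i, ∑ j, (Sg * Sg) i j * z.1 j i)
      (∑ i, ∑ j, (Sg * Sg) i j •
        (entP (n := n) j i)) z₀ := by
    refine HasFDerivAt.fun_sum fun i _ => HasFDerivAt.fun_sum fun j _ => ?_
    have := ((entP (n := n) j i).hasFDerivAt
        (x := z₀)).const_mul ((Sg * Sg) i j)
    exact this
  have hA2 : HasFDerivAt (fun z : Matrix (Fin d) (Fin d) ℝ × (Fin n → ℝ) => ∑ i, z.2 i * r i)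
      (∑ i, r i • (coordP (d := d) i)) z₀ := by
    refine HasFDerivAt.fun_sum fun i _ => ?_
    have := ((coordP (d := d) i).hasFDerivAt
        (x := z₀)).mul_const (r i)
    exact this
  have hA3 : HasFDerivAt (fun z : Matrix (Fin d) (Fin d) ℝ × (Fin n → ℝ) => ∑ i, z.2 i * z.2 i)
      (∑ i, (z₀.2 i • (coordP (d := d) i)
        + z₀.2 i • (coordP (d := d) i))) z₀ := by
    refine HasFDerivAt.fun_sum fun i _ => ?_
    have := ((coordP (d := d) i).hasFDerivAt
        (x := z₀)).mul ((coordP (d := d) i).hasFDerivAt (x := z₀))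
    exact this
  have hA4 : HasFDerivAt (fun z : Matrix (Fin d) (Fin d) ℝ × (Fin n → ℝ) =>
      ∑ i, z.2 i * (R *ᵥ z.2) i)
      (∑ i, (z₀.2 i • (rowP (d := d) R i)
        + (R *ᵥ z₀.2) i • (coordP (d := d) i))) z₀ := by
    refine HasFDerivAt.fun_sum fun i _ => ?_
    have := ((coordP (d := d) i).hasFDerivAt
        (x := z₀)).mul ((rowP (d := d) R i).hasFDerivAt (x := z₀))
    exact this
  have hA5 : HasFDerivAt (fun z : Matrix (Fin d) (Fin d) ℝ × (Fin n → ℝ) =>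
      ∑ i, ∑ j, (Sg * z.1ᵀ * Sg) i j * z.1 j i)
      (∑ i, ∑ j, ((Sg * z₀.1ᵀ * Sg) i j • (entP (n := n) j i)
        + z₀.1 j i • (quadP (n := n) Sg Sg i j))) z₀ := by
    refine HasFDerivAt.fun_sum fun i _ => HasFDerivAt.fun_sum fun j _ => ?_
    have := ((quadP (n := n) Sg Sg i j).hasFDerivAt
        (x := z₀)).mul ((entP (n := n) j i).hasFDerivAt (x := z₀))
    exact this
  have hA6 : HasFDerivAt (fun z : Matrix (Fin d) (Fin d) ℝ × (Fin n → ℝ) =>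
      ∑ i, ∑ j, (Sg * Sg * z.1ᵀ * Sg) i j * z.1 j i)
      (∑ i, ∑ j, ((Sg * Sg * z₀.1ᵀ * Sg) i j • (entP (n := n) j i)
        + z₀.1 j i • (quadP (n := n) (Sg * Sg) Sg i j))) z₀ := by
    refine HasFDerivAt.fun_sum fun i _ => HasFDerivAt.fun_sum fun j _ => ?_
    have := ((quadP (n := n) (Sg * Sg) Sg i j).hasFDerivAt
        (x := z₀)).mul ((entP (n := n) j i).hasFDerivAt (x := z₀))
    exact this
  have hL := ((((hasFDerivAt_const M z₀).congr_fderiv rfl : HasFDerivAt (fun _ => M) (asN 0) z₀).sub ((hA1.const_mul 2).mul hA2)).add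
      ((hA3.const_mul M).mul hA5)).add ((hA3.add hA4).mul hA6)
  refine hL.congr_fderiv ?_
  refine ContinuousLinearMap.ext fun zz => ?_
  show _ = (0 : ℝ)
  simp only [Pi.add_apply, asN_zero_apply, ContinuousLinearMap.sum_apply, ContinuousLinearMap.comp_apply,
    ContinuousLinearMap.add_apply, ContinuousLinearMap.sub_apply,
    ContinuousLinearMap.smul_apply, ContinuousLinearMap.zero_apply, smul_eq_mul,
    ContinuousLinearMap.inl_apply, ContinuousLinearMap.inr_apply,
    ContinuousLinearMap.coe_fst', ContinuousLinearMap.coe_snd',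
    entCLM_apply, coordCLM_apply, entP_apply, quadP_apply, coordP_apply, rowP_apply, rowCLM_apply, quadCLM_apply, trCLM_apply, dotrCLM_apply,
    Pi.zero_apply, Matrix.mulVec_zero, mul_zero, zero_mul, add_zero, zero_add,
    Finset.sum_const_zero, Matrix.transpose_zero, Matrix.mul_zero, Matrix.zero_mul,
    Matrix.zero_apply, zero_sub, Finset.sum_add_distrib, ContinuousLinearMap.neg_apply,
    ContinuousLinearMap.zero_comp]
  linear_combination - hkeyP zz.1 - hkeyw zz.2

lemma sum_sum_eq_trace' {d : ℕ} (A B : Matrix (Fin d) (Fin d) ℝ) :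
    ∑ i, ∑ j, B j i * A i j = Matrix.trace (A * B) := by
  simp [Matrix.trace, Matrix.diag, Matrix.mul_apply, mul_comm]

lemma wconj_smul {d : ℕ} (U : Matrix (Fin d) (Fin d) ℝ) (c : ℝ) (f : Fin d → ℝ) :
    c • (U * Matrix.diagonal f * Uᵀ) = U * Matrix.diagonal (fun i => c * f i) * Uᵀ := by
  rw [show (fun i => c * f i) = c • f from rfl, Matrix.diagonal_smul, Matrix.mul_smul,
    Matrix.smul_mul]

lemma wconj_add {d : ℕ} (U : Matrix (Fin d) (Fin d) ℝ) (f g : Fin d → ℝ) :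
    U * Matrix.diagonal f * Uᵀ + U * Matrix.diagonal g * Uᵀ
      = U * Matrix.diagonal (fun i => f i + g i) * Uᵀ := by
  rw [← Matrix.add_mul, ← Matrix.mul_add, Matrix.diagonal_add]

lemma wconj_mul {d : ℕ} {U : Matrix (Fin d) (Fin d) ℝ} (hU : Uᵀ * U = 1) (f g : Fin d → ℝ) :
    (U * Matrix.diagonal f * Uᵀ) * (U * Matrix.diagonal g * Uᵀ)
      = U * Matrix.diagonal (fun i => f i * g i) * Uᵀ := by
  have h : Uᵀ * (U * Matrix.diagonal g * Uᵀ) = Matrix.diagonal g * Uᵀ := by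
    rw [← Matrix.mul_assoc, ← Matrix.mul_assoc, hU, Matrix.one_mul]
  rw [Matrix.mul_assoc (U * Matrix.diagonal f), h, ← Matrix.mul_assoc,
    Matrix.mul_assoc U, Matrix.diagonal_mul_diagonal]

lemma wconj_trace {d : ℕ} {U : Matrix (Fin d) (Fin d) ℝ} (hU : Uᵀ * U = 1) (f : Fin d → ℝ) :
    Matrix.trace (U * Matrix.diagonal f * Uᵀ) = ∑ i, f i := by
  rw [Matrix.trace_mul_cycle, hU, Matrix.one_mul, Matrix.trace_diagonal]

lemma wconj_transpose_eq {d : ℕ} (U : Matrix (Fin d) (Fin d) ℝ) (f : Fin d → ℝ) :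
    (U * Matrix.diagonal f * Uᵀ)ᵀ = U * Matrix.diagonal f * Uᵀ := by
  rw [Matrix.transpose_mul, Matrix.transpose_mul, Matrix.transpose_transpose,
    Matrix.diagonal_transpose, Matrix.mul_assoc]

lemma wconj_mulVec {d : ℕ} {E : Matrix (Fin d) (Fin d) ℝ} (hE : Eᵀ * E = 1) (f x : Fin d → ℝ) :
    (E * Matrix.diagonal f * Eᵀ) *ᵥ (E *ᵥ x) = E *ᵥ (fun i => f i * x i) := by
  rw [Matrix.mulVec_mulVec, Matrix.mul_assoc, Matrix.mul_assoc, hE, Matrix.mul_one,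
    ← Matrix.mulVec_mulVec]
  have h : Matrix.diagonal f *ᵥ x = fun i => f i * x i :=
    funext fun i => Matrix.mulVec_diagonal f x i
  rw [h]

lemma trace_swapQ {d : ℕ} (X Sg P Q : Matrix (Fin d) (Fin d) ℝ)
    (hS : Sgᵀ = Sg) (hX : Xᵀ = X) :
    Matrix.trace (X * Qᵀ * Sg * P) = Matrix.trace (X * Pᵀ * Sg * Q) := by
  calc Matrix.trace (X * Qᵀ * Sg * P) = Matrix.trace ((X * Qᵀ * Sg * P)ᵀ) :=
        (Matrix.trace_transpose _).symm
    _ = Matrix.trace (Pᵀ * Sg * Q * X) := by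
        simp [Matrix.transpose_mul, hS, hX, Matrix.mul_assoc]
    _ = Matrix.trace (X * (Pᵀ * Sg * Q)) := by rw [Matrix.trace_mul_comm]
    _ = Matrix.trace (X * Pᵀ * Sg * Q) := by rw [← Matrix.mul_assoc, ← Matrix.mul_assoc]

set_option maxHeartbeats 2000000 in
/-- Stationary point of the WPGD risk. If `γ* ≥ 1` is a fixed
point of `γ ↦ h₁(h₂(γ)) + 1`, then with `P* = ((γ*/M)Σ + I)⁻¹` and
`ω* = (h₂(γ*)R + I)⁻¹r`, some positive rescaling `(αP*, βω*)` is a stationary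
point of `L`. -/
theorem stmt14 (d n : ℕ) (hd : 0 < d) (hn : 0 < n) (σ : ℝ) (hσ : 0 ≤ σ)
    (Sg : Matrix (Fin d) (Fin d) ℝ) (hSgsym : Sg.IsSymm) (hSgpd : Sg.PosDef)
    (R : Matrix (Fin n) (Fin n) ℝ) (hRsym : R.IsSymm) (hRpsd : R.PosSemidef)
    (r : Fin n → ℝ) (hr : r ≠ 0)
    (M : ℝ) (hM : M = σ ^ 2 + Matrix.trace Sg)
    -- eigendecompositions `Σ = U diag(s) Uᵀ` and `R = E diag(λ) Eᵀ`
    (s : Fin d → ℝ) (hs : ∀ i, 0 < s i)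
    (U : Matrix (Fin d) (Fin d) ℝ) (hU : Uᵀ * U = 1)
    (hSgd : Sg = U * Matrix.diagonal s * Uᵀ)
    (lam : Fin n → ℝ) (hlam : ∀ i, 0 ≤ lam i)
    (E : Matrix (Fin n) (Fin n) ℝ) (hE : Eᵀ * E = 1)
    (hRd : R = E * Matrix.diagonal lam * Eᵀ)
    (a : Fin n → ℝ) (ha : a = Eᵀ *ᵥ r)
    -- the fixed point
    (γstar : ℝ) (hγ1 : 1 ≤ γstar)
    (hγfix : h1 lam a (h2 s M γstar) + 1 = γstar)
    (Pstar : Matrix (Fin d) (Fin d) ℝ)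
    (hPstar : Pstar = ((γstar / M) • Sg + 1)⁻¹)
    (ωstar : Fin n → ℝ)
    (hωstar : ωstar = (h2 s M γstar • R + 1)⁻¹ *ᵥ r) :
    ∃ c1 c2 : ℝ, 0 < c1 ∧ 0 < c2 ∧
      HasFDerivAt
        (fun pw : Matrix (Fin d) (Fin d) ℝ × (Fin n → ℝ) => Lrisk Sg R r M pw.1 pw.2)
        (0 : (Matrix (Fin d) (Fin d) ℝ × (Fin n → ℝ)) →L[ℝ] ℝ)
        (c1 • Pstar, c2 • ωstar) := by
  
  have hne : Nonempty (Fin d) := ⟨⟨0, hd⟩⟩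
  have hSgsym' : Sgᵀ = Sg := hSgsym
  have hRsym' : Rᵀ = R := hRsym
  have htrSg : Matrix.trace Sg = ∑ i, s i := by rw [hSgd, wconj_trace hU]
  have hM0 : 0 < M := by
    rw [hM, htrSg]
    have hsum : 0 < ∑ i, s i := Finset.sum_pos (fun i _ => hs i) Finset.univ_nonempty
    nlinarith [sq_nonneg σ]
  have hγ0 : 0 < γstar := lt_of_lt_of_le one_pos hγ1
  have hdn : ∀ i, 0 < M + s i * γstar := fun i => add_pos hM0 (mul_pos (hs i) hγ0)
  set A := ∑ i, s i ^ 2 / (M + s i * γstar) ^ 2 with hAdef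
  set B := ∑ i, s i ^ 3 / (M + s i * γstar) ^ 2 with hBdef
  have hA0 : 0 < A :=
    Finset.sum_pos (fun i _ => div_pos (pow_pos (hs i) 2) (pow_pos (hdn i) 2))
      Finset.univ_nonempty
  have hB0 : 0 < B :=
    Finset.sum_pos (fun i _ => div_pos (pow_pos (hs i) 3) (pow_pos (hdn i) 2))
      Finset.univ_nonempty
  set H := h2 s M γstar with hHdef
  have hMAB : 0 < M * A + B := add_pos (mul_pos hM0 hA0) hB0
  have hHB : H = B / (M * A + B) := by
    rw [hHdef, h2, ← hAdef, ← hBdef]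
    rw [show 1 + M * A * B⁻¹ = (M * A + B) / B by field_simp; ring, inv_div]
  have hH0 : 0 < H := by rw [hHB]; exact div_pos hB0 hMAB
  have hEE : E * Eᵀ = 1 := mul_eq_one_comm.mp hE
  have hUU : U * Uᵀ = 1 := mul_eq_one_comm.mp hU
  have hld : ∀ i, 0 < 1 + lam i * H := fun i => by nlinarith [mul_nonneg (hlam i) hH0.le]
  set ωt : Fin n → ℝ := fun i => (1 + lam i * H)⁻¹ * a i with hωtdef
  have hRform : H • R + 1 = E * Matrix.diagonal (fun i => H * lam i + 1) * Eᵀ := by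
    rw [hRd, wconj_smul,
      show (1 : Matrix (Fin n) (Fin n) ℝ) = E * Matrix.diagonal (fun _ => (1:ℝ)) * Eᵀ by
        rw [Matrix.diagonal_one, Matrix.mul_one, hEE],
      wconj_add]
  have hRightInv : (H • R + 1) *
      (E * Matrix.diagonal (fun i => (1 + lam i * H)⁻¹) * Eᵀ) = 1 := by
    rw [hRform, wconj_mul hE,
      show (fun i => (H * lam i + 1) * (1 + lam i * H)⁻¹) = fun _ => (1:ℝ) from
        funext fun i => by
          have h := (hld i).ne'
          rw [add_comm, mul_comm H, mul_inv_cancel₀ h],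
      Matrix.diagonal_one, Matrix.mul_one, hEE]
  have hRinvEq : (H • R + 1)⁻¹ = E * Matrix.diagonal (fun i => (1 + lam i * H)⁻¹) * Eᵀ :=
    Matrix.inv_eq_right_inv hRightInv
  have hra : r = E *ᵥ a := by rw [ha, Matrix.mulVec_mulVec, hEE, Matrix.one_mulVec]
  have hω : ωstar = E *ᵥ ωt := by
    rw [hωstar, hRinvEq, hra, wconj_mulVec hE]
  have hRω : R *ᵥ ωstar = E *ᵥ (fun i => lam i * ωt i) := by
    rw [hω, hRd, wconj_mulVec hE]
  have hEdot : ∀ x y : Fin n → ℝ, (E *ᵥ x) ⬝ᵥ (E *ᵥ y) = x ⬝ᵥ y := by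
    intro x y
    rw [Matrix.dotProduct_mulVec, ← Matrix.mulVec_transpose, Matrix.mulVec_mulVec, hE,
      Matrix.one_mulVec]
  set W := ∑ i, ωt i * ωt i with hWdef
  set Λ := ∑ i, ωt i * (lam i * ωt i) with hΛdef
  set ρ := ∑ i, ωt i * a i with hρdef
  have ha0 : a ≠ 0 := by
    intro h0
    exact hr (by rw [hra, h0, Matrix.mulVec_zero])
  obtain ⟨i0, hi0⟩ : ∃ i, a i ≠ 0 := by
    by_contra hcon
    push_neg at hcon
    exact ha0 (funext hcon)
  have hωt0 : ωt i0 ≠ 0 := mul_ne_zero (inv_ne_zero (hld i0).ne') hi0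
  have hW0 : 0 < W := by
    rw [hWdef]
    exact Finset.sum_pos' (fun i _ => mul_self_nonneg _)
      ⟨i0, Finset.mem_univ _, mul_self_pos.mpr hωt0⟩
  have hh1e : h1 lam a H = Λ * W⁻¹ := by
    rw [h1, hΛdef, hWdef]
    congr 1
    · exact Finset.sum_congr rfl fun i _ => by
        have h := (hld i).ne'
        rw [hωtdef]
        field_simp
    · congr 1
      exact Finset.sum_congr rfl fun i _ => by
        have h := (hld i).ne'
        rw [hωtdef]
        field_simp
  have hΛW : Λ = (γstar - 1) * W := by
    have hfix : h1 lam a H = γstar - 1 := by linarith [hγfix]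
    rw [hh1e] at hfix
    field_simp at hfix
    linarith [hfix]
  have hρW : ρ = W + H * Λ := by
    rw [hρdef, hWdef, hΛdef, Finset.mul_sum, ← Finset.sum_add_distrib]
    exact Finset.sum_congr rfl fun i _ => by
      have h := (hld i).ne'
      rw [hωtdef]
      field_simp
  have hρ0 : 0 < ρ := by
    rw [hρW, hΛW]
    nlinarith [mul_nonneg hH0.le (mul_nonneg (by linarith : (0:ℝ) ≤ γstar - 1) hW0.le)]
  set c1 := ρ / (M * W) with hc1def
  have hc10 : 0 < c1 := div_pos hρ0 (mul_pos hM0 hW0)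
  have hc1W : c1 * (M * W) = ρ := div_mul_cancel₀ _ (mul_pos hM0 hW0).ne'
  -- P-side diagonalization
  set p : Fin d → ℝ := fun i => (γstar / M * s i + 1)⁻¹ with hpdef
  have hpden : ∀ i, 0 < γstar / M * s i + 1 := fun i =>
    add_pos (mul_pos (div_pos hγ0 hM0) (hs i)) one_pos
  have hp : ∀ i, p i * (M + s i * γstar) = M := by
    intro i
    have h := (hpden i).ne'
    have hM' := hM0.ne'
    have hpe : p i = (γstar / M * s i + 1)⁻¹ := rfl
    have hkey : (γstar / M * s i + 1) * M = M + s i * γstar := by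
      rw [add_mul, one_mul, mul_comm (γstar / M) (s i), mul_assoc,
        div_mul_cancel₀ _ hM']
      ring
    rw [hpe, ← hkey, inv_mul_cancel_left₀ h]
  have hPform : (γstar / M) • Sg + 1
      = U * Matrix.diagonal (fun i => γstar / M * s i + 1) * Uᵀ := by
    rw [hSgd, wconj_smul,
      show (1 : Matrix (Fin d) (Fin d) ℝ) = U * Matrix.diagonal (fun _ => (1:ℝ)) * Uᵀ by
        rw [Matrix.diagonal_one, Matrix.mul_one, hUU],
      wconj_add]
  have hPRightInv : ((γstar / M) • Sg + 1) * (U * Matrix.diagonal p * Uᵀ) = 1 := by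
    rw [hPform, wconj_mul hU,
      show (fun i => (γstar / M * s i + 1) * p i) = fun _ => (1:ℝ) from
        funext fun i => mul_inv_cancel₀ (hpden i).ne',
      Matrix.diagonal_one, Matrix.mul_one, hUU]
  have hPU : Pstar = U * Matrix.diagonal p * Uᵀ := by
    rw [hPstar]
    exact Matrix.inv_eq_right_inv hPRightInv
  have hPsym : Pstarᵀ = Pstar := by rw [hPU]; exact wconj_transpose_eq U p
  have hP0t : (c1 • Pstar)ᵀ = c1 • Pstar := by rw [Matrix.transpose_smul, hPsym]
  have hSSt : (Sg * Sg)ᵀ = Sg * Sg := by rw [Matrix.transpose_mul, hSgsym']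
  have hSSU : Sg * Sg = U * Matrix.diagonal (fun i => s i * s i) * Uᵀ := by
    rw [hSgd, wconj_mul hU]
  -- trace values
  have hsum1 : ∑ i, s i * s i * p i = M * (M * A + γstar * B) := by
    rw [hAdef, hBdef, mul_add M, Finset.mul_sum, Finset.mul_sum, Finset.mul_sum,
      Finset.mul_sum, ← Finset.sum_add_distrib]
    exact Finset.sum_congr rfl fun i _ => by
      have h := (hdn i).ne'
      clear_value p
      field_simp
      linear_combination (s i * s i) * hp i
  have hsum2 : ∑ i, s i * p i * s i * p i = M * M * A := by
    rw [hAdef, Finset.mul_sum]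
    exact Finset.sum_congr rfl fun i _ => by
      have h := (hdn i).ne'
      field_simp
      linear_combination (s i * s i * (p i * (M + s i * γstar) + M)) * hp i
  have hsum3 : ∑ i, s i * s i * p i * s i * p i = M * M * B := by
    rw [hBdef, Finset.mul_sum]
    exact Finset.sum_congr rfl fun i _ => by
      have h := (hdn i).ne'
      field_simp
      linear_combination (s i * s i * s i * (p i * (M + s i * γstar) + M)) * hp i
  have htrSSP : Matrix.trace (Sg * Sg * Pstar) = M * (M * A + γstar * B) := by
    rw [hSSU, hPU, wconj_mul hU, wconj_trace hU]
    exact hsum1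
  have htrA : Matrix.trace (Sg * Pstar * Sg * Pstar) = M * M * A := by
    rw [hSgd, hPU, wconj_mul hU, wconj_mul hU, wconj_mul hU, wconj_trace hU]
    exact hsum2
  have htrB : Matrix.trace (Sg * Sg * Pstar * Sg * Pstar) = M * M * B := by
    rw [hSSU, hPU, hSgd, wconj_mul hU, wconj_mul hU, wconj_mul hU, wconj_trace hU]
    exact hsum3
  -- scalar keys
  have hkeyc : c1 * M * (M * A + B) = M * A + γstar * B := by
    have hx : ρ * (M * A + B) = W * (M * A + γstar * B) := by
      rw [hρW, hΛW, hHB]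
      field_simp
      ring
    have h1' : c1 * M * (M * A + B) * W = (M * A + γstar * B) * W := by
      linear_combination (M * A + B) * hc1W + hx
    exact mul_right_cancel₀ hW0.ne' h1'
  have hHMAB : H * (M * A + B) = B := by
    rw [hHB]
    field_simp
  have hE1 : c1 * (M * (M * A + γstar * B))
      = M * (c1 * c1 * (M * M * A)) + c1 * c1 * (M * M * B) := by
    linear_combination (-(c1 * M)) * hkeyc
  have hE2 : c1 * (M * (M * A + γstar * B)) * H = c1 * c1 * (M * M * B) := by
    linear_combination (-(c1 * M * H)) * hkeyc + (c1 * c1 * M * M) * hHMAB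
  have hai : ∀ i, a i = (1 + lam i * H) * ωt i := by
    intro i
    have h := (hld i).ne'
    simp only [hωtdef]
    field_simp
  -- the stationarity vector identity
  have hu : (2 * (c1 * (M * (M * A + γstar * B)))) • r
      = (M * (c1 * c1 * (M * M * A)) * 2 + c1 * c1 * (M * M * B) * 2) • ωstar
        + (2 * (c1 * c1 * (M * M * B))) • (R *ᵥ ωstar) := by
    rw [hra, hRω, hω, ← Matrix.mulVec_smul, ← Matrix.mulVec_smul, ← Matrix.mulVec_smul,
      ← Matrix.mulVec_add]
    refine congrArg (fun x => E *ᵥ x) ?_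
    funext i
    simp only [Pi.smul_apply, Pi.add_apply, smul_eq_mul]
    rw [hai i]
    linear_combination (2 * ωt i) * hE1 + (2 * lam i * ωt i) * hE2
  -- trace values at c1 • Pstar
  have hT2v : Matrix.trace (Sg * Sg * (c1 • Pstar)) = c1 * (M * (M * A + γstar * B)) := by
    rw [Matrix.mul_smul, Matrix.trace_smul, smul_eq_mul, htrSSP]
  have hT5v : Matrix.trace (Sg * (c1 • Pstar)ᵀ * Sg * (c1 • Pstar)) = c1 * c1 * (M * M * A) := by
    rw [hP0t]
    simp only [Matrix.mul_smul, Matrix.smul_mul, Matrix.trace_smul, smul_eq_mul]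
    rw [htrA]
    ring
  have hT6v : Matrix.trace (Sg * Sg * (c1 • Pstar)ᵀ * Sg * (c1 • Pstar))
      = c1 * c1 * (M * M * B) := by
    rw [hP0t]
    simp only [Matrix.mul_smul, Matrix.smul_mul, Matrix.trace_smul, smul_eq_mul]
    rw [htrB]
    ring
  -- key identity in the ω-direction
  have hkeyw : ∀ v : Fin n → ℝ,
      2 * (∑ x, ∑ y, (Sg * Sg) x y * (c1 • Pstar) y x) * (∑ x, r x * v x)
      = (∑ x, ∑ y, (Sg * (c1 • Pstar)ᵀ * Sg) x y * (c1 • Pstar) y x)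
          * (M * (2 * ∑ x, ωstar x * v x))
        + (∑ x, ∑ y, (Sg * Sg * (c1 • Pstar)ᵀ * Sg) x y * (c1 • Pstar) y x) *
          (2 * (∑ x, ωstar x * v x)
            + ((∑ x, ωstar x * (R *ᵥ v) x) + ∑ x, (R *ᵥ ωstar) x * v x)) := by
    intro v
    rw [sum_sum_eq_trace (Sg * Sg) (c1 • Pstar),
      sum_sum_eq_trace (Sg * (c1 • Pstar)ᵀ * Sg) (c1 • Pstar),
      sum_sum_eq_trace (Sg * Sg * (c1 • Pstar)ᵀ * Sg) (c1 • Pstar),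
      hT2v, hT5v, hT6v]
    have e1 : (∑ x, r x * v x) = r ⬝ᵥ v := rfl
    have e2 : (∑ x, ωstar x * v x) = ωstar ⬝ᵥ v := rfl
    have e3 : (∑ x, (R *ᵥ ωstar) x * v x) = (R *ᵥ ωstar) ⬝ᵥ v := rfl
    have e4 : (∑ x, ωstar x * (R *ᵥ v) x) = (R *ᵥ ωstar) ⬝ᵥ v := by
      rw [show (∑ x, ωstar x * (R *ᵥ v) x) = ωstar ⬝ᵥ (R *ᵥ v) from rfl,
        Matrix.dotProduct_mulVec, ← Matrix.mulVec_transpose, hRsym']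
    rw [e1, e2, e3, e4]
    have hdv := congrArg (fun u => u ⬝ᵥ v) hu
    simp only [add_dotProduct, smul_dotProduct, smul_eq_mul] at hdv
    linear_combination hdv
  -- key identity in the P-direction
  have hC : (∑ x, ωstar x * r x) • (Sg * Sg)
      = (M * ∑ x, ωstar x * ωstar x) • (Sg * (c1 • Pstar) * Sg)
        + ((∑ x, ωstar x * ωstar x) + ∑ x, ωstar x * (R *ᵥ ωstar) x)
            • (Sg * Sg * (c1 • Pstar) * Sg) := by
    have e1 : (∑ x, ωstar x * r x) = ρ := by
      rw [show (∑ x, ωstar x * r x) = ωstar ⬝ᵥ r from rfl, hra, hω, hEdot]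
      exact hρdef.symm
    have e2 : (∑ x, ωstar x * ωstar x) = W := by
      rw [show (∑ x, ωstar x * ωstar x) = ωstar ⬝ᵥ ωstar from rfl, hω, hEdot]
      exact hWdef.symm
    have e3 : (∑ x, ωstar x * (R *ᵥ ωstar) x) = Λ := by
      rw [show (∑ x, ωstar x * (R *ᵥ ωstar) x) = ωstar ⬝ᵥ (R *ᵥ ωstar) from rfl,
        hRω, hω, hEdot]
      exact hΛdef.symm
    rw [e1, e2, e3]
    have hX1 : Sg * (c1 • Pstar) * Sg
        = U * Matrix.diagonal (fun i => c1 * (s i * p i * s i)) * Uᵀ := by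
      rw [Matrix.mul_smul, Matrix.smul_mul, hSgd, hPU, wconj_mul hU, wconj_mul hU, wconj_smul]
    have hX2 : Sg * Sg * (c1 • Pstar) * Sg
        = U * Matrix.diagonal (fun i => c1 * (s i * s i * p i * s i)) * Uᵀ := by
      rw [Matrix.mul_smul, Matrix.smul_mul, hSSU, hSgd, hPU, wconj_mul hU, wconj_mul hU,
        wconj_smul]
    rw [hX2, hX1, hSSU, wconj_smul, wconj_smul, wconj_smul, wconj_add]
    have hfg : (fun i => ρ * (s i * s i))
        = fun i => M * W * (c1 * (s i * p i * s i))
            + (W + Λ) * (c1 * (s i * s i * p i * s i)) := by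
      funext i
      linear_combination (-(s i * s i)) * hc1W + (-(c1 * p i * s i * s i * s i)) * hΛW
        + (-(c1 * W * s i * s i)) * hp i
    rw [hfg]
  have hkeyP : ∀ zz : Matrix (Fin d) (Fin d) ℝ,
      2 * (∑ x, ωstar x * r x) * (∑ x, ∑ y, (Sg * Sg) x y * zz y x)
      = (M * ∑ x, ωstar x * ωstar x) *
          ((∑ x, ∑ y, (Sg * (c1 • Pstar)ᵀ * Sg) x y * zz y x)
            + (∑ x, ∑ y, (c1 • Pstar) y x * (Sg * zzᵀ * Sg) x y))
        + ((∑ x, ωstar x * ωstar x) + ∑ x, ωstar x * (R *ᵥ ωstar) x) *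
          ((∑ x, ∑ y, (Sg * Sg * (c1 • Pstar)ᵀ * Sg) x y * zz y x)
            + (∑ x, ∑ y, (c1 • Pstar) y x * (Sg * Sg * zzᵀ * Sg) x y)) := by
    intro zz
    rw [sum_sum_eq_trace (Sg * Sg) zz,
      sum_sum_eq_trace (Sg * (c1 • Pstar)ᵀ * Sg) zz,
      sum_sum_eq_trace' (Sg * zzᵀ * Sg) (c1 • Pstar),
      sum_sum_eq_trace (Sg * Sg * (c1 • Pstar)ᵀ * Sg) zz,
      sum_sum_eq_trace' (Sg * Sg * zzᵀ * Sg) (c1 • Pstar),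
      trace_swapQ Sg Sg (c1 • Pstar) zz hSgsym' hSgsym',
      trace_swapQ (Sg * Sg) Sg (c1 • Pstar) zz hSgsym' hSSt,
      hP0t]
    have hCtr := congrArg (fun C => Matrix.trace (C * zz)) hC
    simp only [Matrix.add_mul, Matrix.smul_mul, Matrix.trace_add, Matrix.trace_smul,
      smul_eq_mul] at hCtr
    linear_combination 2 * hCtr
  refine ⟨c1, 1, hc10, one_pos, ?_⟩
  rw [one_smul]
  exact lrisk_hasFDerivAt_zero Sg R r M (c1 • Pstar) ωstar hkeyP hkeyw
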